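/- Ekeland's variational principle: Let $(V,d)$ be a complete metric space and $F:V\to\mathbb{R}\cup\{+\infty\}$ lower semicontinuous, bounded below, and not identically $+\infty$. Fix $\varepsilon>0$ and $u\in V$ with $F(u)\le\varepsilon+\inf_V F$. Then for every $\gamma>0$ there exists $v\in V$ with $F(v)\le F(u)$, $d(u,v)\le\gamma$, and $F(w)>F(v)-\tfrac{\varepsilon}{\gamma}d(v,w)$ for all $w\ne v$. -/

import Mathlib

open Filter Topology

private lemma ereal_exists_real {a : EReal} (h1 : a ≠ ⊥) (h2 : a ≠ ⊤) :
    ∃ r : ℝ, a = (r : EReal) := by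
  induction a using EReal.rec with
  | bot => exact absurd rfl h1
  | coe r => exact ⟨r, rfl⟩
  | top => exact absurd rfl h2

/-- Ekeland's variational principle (quantitative form). -/
theorem stmt_11 {V : Type*} [MetricSpace V] [CompleteSpace V]
    (F : V → EReal) (hlsc : LowerSemicontinuous F)
    (hbdd : ∃ m : ℝ, ∀ x, (m : EReal) ≤ F x)
    (hproper : ∃ x, F x ≠ ⊤) (hbot : ∀ x, F x ≠ ⊥)
    (ε : ℝ) (hε : 0 < ε) (u : V)
    (hu : F u ≤ (ε : EReal) + sInf (Set.range F)) :
    ∀ γ : ℝ, 0 < γ → ∃ v : V, F v ≤ F u ∧ dist u v ≤ γ ∧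
      ∀ w : V, w ≠ v → F v - ((ε / γ * dist v w : ℝ) : EReal) < F w := by
  intro γ hγ
  obtain ⟨m, hm⟩ := hbdd
  set c : ℝ := ε / γ with hcdef
  have hc : 0 < c := div_pos hε hγ
  -- the infimum is a real number
  have hs_le : ∀ x, sInf (Set.range F) ≤ F x := fun x => sInf_le ⟨x, rfl⟩
  have hms : (m : EReal) ≤ sInf (Set.range F) := le_sInf (by rintro _ ⟨x, rfl⟩; exact hm x)
  obtain ⟨x₀, hx₀⟩ := hproper
  have hsbot : sInf (Set.range F) ≠ ⊥ := fun h => by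
    rw [h] at hms; exact absurd (le_bot_iff.1 hms) (by simp)
  have hstop : sInf (Set.range F) ≠ ⊤ := fun h => hx₀ (top_le_iff.1 (h ▸ hs_le x₀))
  obtain ⟨s, hs⟩ := ereal_exists_real hsbot hstop
  rw [hs] at hu hs_le
  -- F u is a real number
  have hFu_top : F u ≠ ⊤ := by
    intro h
    rw [h, ← EReal.coe_add, top_le_iff] at hu
    exact EReal.coe_ne_top _ hu
  -- key existence step
  have key : ∀ (x : V), F x ≠ ⊤ → ∀ δ : ℝ, 0 < δ →
      ∃ y : V, (F y + ((c * dist x y : ℝ) : EReal) ≤ F x) ∧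
        ∀ z : V, F z + ((c * dist x z : ℝ) : EReal) ≤ F x → F y ≤ F z + (δ : EReal) := by
    intro x hx δ hδ
    set S : Set V := {y | F y + ((c * dist x y : ℝ) : EReal) ≤ F x} with hS
    have hxS : x ∈ S := by simp [hS]
    have hSbot : sInf (F '' S) ≠ ⊥ := by
      intro h
      have : (m : EReal) ≤ sInf (F '' S) := le_sInf (by rintro _ ⟨z, _, rfl⟩; exact hm z)
      rw [h] at this; exact absurd (le_bot_iff.1 this) (by simp)
    have hStop : sInf (F '' S) ≠ ⊤ := by
      intro h
      have : sInf (F '' S) ≤ F x := sInf_le ⟨x, hxS, rfl⟩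
      rw [h, top_le_iff] at this; exact hx this
    obtain ⟨i, hi⟩ := ereal_exists_real hSbot hStop
    have hlt : sInf (F '' S) < ((i + δ : ℝ) : EReal) := by
      rw [hi]; exact_mod_cast (lt_add_of_pos_right i hδ)
    obtain ⟨_, ⟨y, hyS, rfl⟩, hylt⟩ := sInf_lt_iff.1 hlt
    refine ⟨y, hyS, fun z hz => ?_⟩
    have : ((i : ℝ) : EReal) ≤ F z := hi ▸ sInf_le ⟨z, hz, rfl⟩
    calc F y ≤ ((i + δ : ℝ) : EReal) := le_of_lt hylt
    _ = ((i : ℝ) : EReal) + (δ : EReal) := by norm_cast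
    _ ≤ F z + (δ : EReal) := by exact add_le_add_left this _
  choose! next hnext1 hnext2 using key
  -- the sequence
  set seq : ℕ → V := fun n => Nat.rec u (fun k x => next x ((1/2) ^ k)) n with hseq
  have hseq0 : seq 0 = u := rfl
  have hseqS : ∀ n, seq (n + 1) = next (seq n) ((1/2) ^ n) := fun n => rfl
  have hpow : ∀ n : ℕ, (0:ℝ) < (1/2) ^ n := fun n => by positivity
  -- finiteness invariant
  have hfin : ∀ n, F (seq n) ≠ ⊤ := by
    intro n
    induction n with
    | zero => exact hFu_top
    | succ k ih =>
      have h1 := hnext1 (seq k) ih ((1/2)^k) (hpow k)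
      rw [← hseqS k] at h1
      intro htop
      rw [htop, EReal.top_add_coe] at h1
      exact ih (top_le_iff.1 h1)
  -- real values along the sequence
  set r : ℕ → ℝ := fun n => (F (seq n)).toReal with hr
  have hrF : ∀ n, F (seq n) = ((r n : ℝ) : EReal) := fun n =>
    (EReal.coe_toReal (hfin n) (hbot _)).symm
  -- basic real inequality
  have hA : ∀ n, r (n+1) + c * dist (seq n) (seq (n+1)) ≤ r n := by
    intro n
    have h1 := hnext1 (seq n) (hfin n) ((1/2)^n) (hpow n)
    rw [← hseqS n, hrF n, hrF (n+1)] at h1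
    exact_mod_cast h1
  have hB : ∀ n z, F z + ((c * dist (seq n) z : ℝ) : EReal) ≤ F (seq n) →
      F (seq (n+1)) ≤ F z + ((((1:ℝ)/2)^n : ℝ) : EReal) := by
    intro n z hz
    have := hnext2 (seq n) (hfin n) ((1/2)^n) (hpow n) z hz
    rw [← hseqS n] at this
    exact this
  -- chain inequality
  have hchain : ∀ n k, r (n+k) + c * dist (seq n) (seq (n+k)) ≤ r n := by
    intro n k
    induction k with
    | zero => simp
    | succ j ih =>
      have e : n + (j+1) = (n+j) + 1 := by omega
      rw [e]
      have htri : dist (seq n) (seq ((n+j)+1)) ≤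
          dist (seq n) (seq (n+j)) + dist (seq (n+j)) (seq ((n+j)+1)) := dist_triangle _ _ _
      have hA' := hA (n+j)
      nlinarith [mul_le_mul_of_nonneg_left htri hc.le]
  have hchain' : ∀ n k, n ≤ k → r k + c * dist (seq n) (seq k) ≤ r n := by
    intro n k hnk
    obtain ⟨j, rfl⟩ := Nat.exists_eq_add_of_le hnk
    exact hchain n j
  -- r is antitone and bounded below
  have hanti : Antitone r := antitone_nat_of_succ_le fun n =>
    le_trans (le_add_of_nonneg_right (mul_nonneg hc.le dist_nonneg)) (hA n)
  have hmr : ∀ n, m ≤ r n := by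
    intro n
    have := hm (seq n)
    rw [hrF n] at this
    exact_mod_cast this
  have hbdd : BddBelow (Set.range r) := ⟨m, by rintro _ ⟨n, rfl⟩; exact hmr n⟩
  set L : ℝ := ⨅ n, r n with hL
  have hrL : Filter.Tendsto r Filter.atTop (𝓝 L) := tendsto_atTop_ciInf hanti hbdd
  have hLr : ∀ n, L ≤ r n := fun n => ciInf_le hbdd n
  -- Cauchy
  have hcauchy : CauchySeq seq := by
    apply cauchySeq_of_le_tendsto_0 (fun N => 2 * (r N - L) / c)
    · intro n k N hn hk
      have h1 := hchain' N n hn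
      have h2 := hchain' N k hk
      have h3 := dist_triangle (seq n) (seq N) (seq k)
      have h4 := hLr n
      have h5 := hLr k
      rw [dist_comm (seq n) (seq N)] at h3
      rw [le_div_iff₀ hc]
      nlinarith [mul_le_mul_of_nonneg_left h3 hc.le]
    · have : Filter.Tendsto (fun N => 2 * (r N - L) / c) Filter.atTop (𝓝 (2 * (L - L) / c)) := by
        apply Filter.Tendsto.div_const
        exact (hrL.sub_const L).const_mul 2
      simpa using this
  obtain ⟨v, hv⟩ := cauchySeq_tendsto_of_complete hcauchy
  -- lower semicontinuity at v : F v ≤ L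
  have hFvL : F v ≤ ((L : ℝ) : EReal) := by
    by_contra hcon
    push_neg at hcon
    obtain ⟨y, hy1, hy2⟩ := exists_between hcon
    have hyb : y ≠ ⊥ := fun h => by rw [h] at hy1; exact absurd hy1 (by simp)
    have hyt : y ≠ ⊤ := fun h => by rw [h] at hy2; exact (lt_irrefl _ (lt_of_le_of_lt le_top hy2)).elim
    obtain ⟨y', rfl⟩ := ereal_exists_real hyb hyt
    have hev : ∀ᶠ n in Filter.atTop, ((y' : ℝ) : EReal) < F (seq n) :=
      hv.eventually (hlsc v _ hy2)
    have hLy : L < y' := by exact_mod_cast hy1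
    have hev2 : ∀ᶠ n in Filter.atTop, r n < y' := hrL.eventually_lt_const hLy
    obtain ⟨n, h1, h2⟩ := (hev.and hev2).exists
    rw [hrF n] at h1
    have : y' < r n := by exact_mod_cast h1
    linarith
  have hFvtop : F v ≠ ⊤ := fun h => by rw [h, top_le_iff] at hFvL; exact EReal.coe_ne_top _ hFvL
  set a : ℝ := (F v).toReal with ha
  have haF : F v = ((a : ℝ) : EReal) := (EReal.coe_toReal hFvtop (hbot v)).symm
  have haL : a ≤ L := by rw [haF] at hFvL; exact_mod_cast hFvL
  -- v ∈ S (seq n) for all n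
  have hvS : ∀ n, a + c * dist (seq n) v ≤ r n := by
    intro n
    have hd : Filter.Tendsto (fun k => dist (seq n) (seq k)) Filter.atTop
        (𝓝 (dist (seq n) v)) :=
      Filter.Tendsto.dist tendsto_const_nhds hv
    have hlim : Filter.Tendsto (fun k => r k + c * dist (seq n) (seq k))
        Filter.atTop (𝓝 (L + c * dist (seq n) v)) := hrL.add (hd.const_mul c)
    have : L + c * dist (seq n) v ≤ r n := by
      apply le_of_tendsto hlim
      filter_upwards [Filter.eventually_ge_atTop n] with k hk
      exact hchain' n k hk
    linarith
  refine ⟨v, ?_, ?_, ?_⟩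
  · -- F v ≤ F u
    have h0 := hvS 0
    have h2 : a ≤ r 0 := by nlinarith [mul_nonneg hc.le (dist_nonneg (x := seq 0) (y := v))]
    calc F v = ((a : ℝ) : EReal) := haF
    _ ≤ ((r 0 : ℝ) : EReal) := by exact_mod_cast h2
    _ = F u := by rw [← hseq0]; exact (hrF 0).symm
  · -- dist u v ≤ γ
    have h1 := hvS 0
    rw [hseq0] at h1
    have hru : r 0 ≤ ε + s := by
      have := hu
      rw [← hseq0, hrF 0, ← EReal.coe_add] at this
      exact_mod_cast this
    have hsa : s ≤ a := by
      have := hs_le v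
      rw [haF] at this
      exact_mod_cast this
    have hcd : c * dist u v ≤ ε := by linarith
    have hduv : dist u v ≤ ε / c := by
      rw [le_div_iff₀ hc]; nlinarith
    calc dist u v ≤ ε / c := hduv
    _ = γ := by rw [hcdef]; field_simp
  · -- the variational inequality
    intro w hw
    by_contra hcon
    push_neg at hcon
    rw [haF] at hcon
    rw [← EReal.coe_sub] at hcon
    have hFwtop : F w ≠ ⊤ := fun h => by
      rw [h, top_le_iff] at hcon; exact EReal.coe_ne_top _ hcon
    set b : ℝ := (F w).toReal with hb
    have hbF : F w = ((b : ℝ) : EReal) := (EReal.coe_toReal hFwtop (hbot w)).symm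
    have hbcon : b ≤ a - c * dist v w := by rw [hbF] at hcon; exact_mod_cast hcon
    have hdvw : 0 < dist v w := dist_pos.2 (fun h => hw h.symm)
    -- w ∈ S (seq n) for all n
    have hwS : ∀ n, b + c * dist (seq n) w ≤ r n := by
      intro n
      have htri : dist (seq n) w ≤ dist (seq n) v + dist v w := dist_triangle _ _ _
      have := hvS n
      nlinarith [mul_le_mul_of_nonneg_left htri hc.le]
    -- so F (seq (n+1)) ≤ F w + (1/2)^n
    have hstep : ∀ n, r (n+1) ≤ b + (1/2)^n := by
      intro n
      have h1 : F w + ((c * dist (seq n) w : ℝ) : EReal) ≤ F (seq n) := by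
        rw [hbF, hrF n, ← EReal.coe_add]
        exact_mod_cast hwS n
      have h2 := hB n w h1
      rw [hrF (n+1), hbF, ← EReal.coe_add] at h2
      exact_mod_cast h2
    -- take the limit
    have hLb : L ≤ b := by
      have h1 : Filter.Tendsto (fun n : ℕ => b + (1/2:ℝ)^n) Filter.atTop (𝓝 (b + 0)) :=
        tendsto_const_nhds.add (tendsto_pow_atTop_nhds_zero_of_lt_one (by norm_num) (by norm_num))
      rw [add_zero] at h1
      have h2 : Filter.Tendsto (fun n : ℕ => r (n+1)) Filter.atTop (𝓝 L) :=
        hrL.comp (Filter.tendsto_add_atTop_nat 1)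
      exact le_of_tendsto_of_tendsto' h2 h1 hstep
    nlinarith
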